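/- Fix k ≥ 3 and a Sidon set 0 = a₀ < a₁ < … < a_{k-1} ≤ 2k². For N ≥ 2(2k²+1), define intervals Iᵢ = (N/(a_{k-1}+1))·[aᵢ, aᵢ + 1/2) ∩ ℕ for 1 ≤ i ≤ k-1 and I₀ = {0}. Then the family ℬ = {{b₀, …, b_{k-1}} : bᵢ ∈ Iᵢ} is a Sidon system: if U, V, U*, V* ∈ ℬ with U + V = U* + V*, then {U, V} = {U*, V*}. -/
import Mathlib


open Finset Pointwise

private lemma pair_cases {i j p q : ℕ} (hij : i ≠ j) (h : ({i, j} : Finset ℕ) = {p, q}) :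
    (p = i ∧ q = j) ∨ (p = j ∧ q = i) := by
  have hp : p = i ∨ p = j := by
    have : p ∈ ({i, j} : Finset ℕ) := by rw [h]; simp
    simpa using this
  have hq : q = i ∨ q = j := by
    have : q ∈ ({i, j} : Finset ℕ) := by rw [h]; simp
    simpa using this
  have hi : i = p ∨ i = q := by
    have : i ∈ ({p, q} : Finset ℕ) := by rw [← h]; simp
    simpa using this
  have hj : j = p ∨ j = q := by
    have : j ∈ ({p, q} : Finset ℕ) := by rw [← h]; simp
    simpa using this
  omega

theorem interval_construction_is_sidon_system (k N : ℕ) (hk : 3 ≤ k)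
    (a : ℕ → ℤ) (ha0 : a 0 = 0)
    (hmono : ∀ i j : ℕ, i < j → j < k → a i < a j)
    (hbound : a (k - 1) ≤ 2 * (k : ℤ) ^ 2)
    (hSidon : ∀ i j i' j' : ℕ, i < k → j < k → i' < k → j' < k →
      a i + a j = a i' + a j' → ({i, j} : Finset ℕ) = {i', j'})
    (hN : 2 * (2 * k ^ 2 + 1) ≤ N)
    (I : ℕ → Finset ℤ) (hI0 : I 0 = {0})
    (hIdef : ∀ i : ℕ, 1 ≤ i → i < k →
      I i = (Finset.Icc (0 : ℤ) (N : ℤ)).filter (fun n : ℤ =>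
        ((N : ℚ) / ((a (k - 1) : ℚ) + 1)) * (a i : ℚ) ≤ (n : ℚ) ∧
        (n : ℚ) < ((N : ℚ) / ((a (k - 1) : ℚ) + 1)) * ((a i : ℚ) + 1 / 2)))
    (U V U' V' : Finset ℤ)
    (hU : ∃ b : ℕ → ℤ, (∀ i < k, b i ∈ I i) ∧ U = (Finset.range k).image b)
    (hV : ∃ b : ℕ → ℤ, (∀ i < k, b i ∈ I i) ∧ V = (Finset.range k).image b)
    (hU' : ∃ b : ℕ → ℤ, (∀ i < k, b i ∈ I i) ∧ U' = (Finset.range k).image b)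
    (hV' : ∃ b : ℕ → ℤ, (∀ i < k, b i ∈ I i) ∧ V' = (Finset.range k).image b)
    (heq : U + V = U' + V') :
    ({U, V} : Finset (Finset ℤ)) = {U', V'} := by
  obtain ⟨b, hb, hUb⟩ := hU
  obtain ⟨d, hd, hVd⟩ := hV
  obtain ⟨b', hb', hU'b⟩ := hU'
  obtain ⟨d', hd', hV'd⟩ := hV'
  set c : ℚ := (N : ℚ) / ((a (k - 1) : ℚ) + 1) with hc
  have hak : 0 < a (k - 1) := by
    have := hmono 0 (k - 1) (by omega) (by omega)
    omega
  have hcpos : 0 < c := by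
    apply div_pos
    · have : 0 < N := by nlinarith
      exact_mod_cast this
    · have : (0 : ℚ) < (a (k - 1) : ℚ) := by exact_mod_cast hak
      linarith
  -- bounds for elements of I i
  have hbnd : ∀ i, i < k → ∀ x : ℤ, x ∈ I i →
      c * (a i : ℚ) ≤ (x : ℚ) ∧ (x : ℚ) < c * (a i : ℚ) + c / 2 := by
    intro i hi x hx
    rcases Nat.eq_zero_or_pos i with rfl | hi1
    · rw [hI0, Finset.mem_singleton] at hx
      subst hx
      rw [ha0]
      constructor <;> push_cast <;> linarith
    · rw [hIdef i hi1 hi, Finset.mem_filter] at hx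
      obtain ⟨-, h1, h2⟩ := hx
      have hr : c * ((a i : ℚ) + 1 / 2) = c * (a i : ℚ) + c / 2 := by ring
      exact ⟨h1, by linarith⟩
  -- the key separation property
  have hF2 : ∀ i j i' j' : ℕ, i < k → j < k → i' < k → j' < k →
      ∀ x y x' y' : ℤ, x ∈ I i → y ∈ I j → x' ∈ I i' → y' ∈ I j' →
      x + y = x' + y' → ({i, j} : Finset ℕ) = {i', j'} := by
    intro i j i' j' hi hj hi' hj' x y x' y' hx hy hx' hy' hxy
    obtain ⟨hx1, hx2⟩ := hbnd i hi x hx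
    obtain ⟨hy1, hy2⟩ := hbnd j hj y hy
    obtain ⟨hx'1, hx'2⟩ := hbnd i' hi' x' hx'
    obtain ⟨hy'1, hy'2⟩ := hbnd j' hj' y' hy'
    have hxyq : (x : ℚ) + (y : ℚ) = (x' : ℚ) + (y' : ℚ) := by exact_mod_cast hxy
    have hss : a i + a j = a i' + a j' := by
      by_contra hne
      rcases lt_or_gt_of_ne hne with h | h
      · have h1 : (a i : ℚ) + (a j : ℚ) + 1 ≤ (a i' : ℚ) + (a j' : ℚ) := by
          have : a i + a j + 1 ≤ a i' + a j' := by omega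
          exact_mod_cast this
        nlinarith
      · have h1 : (a i' : ℚ) + (a j' : ℚ) + 1 ≤ (a i : ℚ) + (a j : ℚ) := by
          have : a i' + a j' + 1 ≤ a i + a j := by omega
          exact_mod_cast this
        nlinarith
    exact hSidon i j i' j' hi hj hi' hj' hss
  have hb0 : b 0 = 0 := by have := hb 0 (by omega); rw [hI0] at this; simpa using this
  have hd0 : d 0 = 0 := by have := hd 0 (by omega); rw [hI0] at this; simpa using this
  have hb'0 : b' 0 = 0 := by have := hb' 0 (by omega); rw [hI0] at this; simpa using this
  have hd'0 : d' 0 = 0 := by have := hd' 0 (by omega); rw [hI0] at this; simpa using this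
  -- decomposition of b i + d j in terms of b', d'
  have decompose : ∀ i j : ℕ, i < k → j < k →
      ∃ p q : ℕ, p < k ∧ q < k ∧ ({i, j} : Finset ℕ) = {p, q} ∧ b i + d j = b' p + d' q := by
    intro i j hi hj
    have hmem : b i + d j ∈ U' + V' := by
      rw [← heq]
      refine Finset.add_mem_add ?_ ?_
      · rw [hUb]; exact Finset.mem_image.mpr ⟨i, Finset.mem_range.mpr hi, rfl⟩
      · rw [hVd]; exact Finset.mem_image.mpr ⟨j, Finset.mem_range.mpr hj, rfl⟩
    rw [Finset.mem_add] at hmem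
    obtain ⟨x, hx, y, hy, hxy⟩ := hmem
    rw [hU'b] at hx; rw [hV'd] at hy
    obtain ⟨p, hp, rfl⟩ := Finset.mem_image.mp hx
    obtain ⟨q, hq, rfl⟩ := Finset.mem_image.mp hy
    rw [Finset.mem_range] at hp hq
    exact ⟨p, q, hp, hq,
      hF2 i j p q hi hj hp hq (b i) (d j) (b' p) (d' q) (hb i hi) (hd j hj)
        (hb' p hp) (hd' q hq) hxy.symm, hxy.symm⟩
  have decompose' : ∀ i j : ℕ, i < k → j < k →
      ∃ p q : ℕ, p < k ∧ q < k ∧ ({i, j} : Finset ℕ) = {p, q} ∧ b' i + d' j = b p + d q := by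
    intro i j hi hj
    have hmem : b' i + d' j ∈ U + V := by
      rw [heq]
      refine Finset.add_mem_add ?_ ?_
      · rw [hU'b]; exact Finset.mem_image.mpr ⟨i, Finset.mem_range.mpr hi, rfl⟩
      · rw [hV'd]; exact Finset.mem_image.mpr ⟨j, Finset.mem_range.mpr hj, rfl⟩
    rw [Finset.mem_add] at hmem
    obtain ⟨x, hx, y, hy, hxy⟩ := hmem
    rw [hUb] at hx; rw [hVd] at hy
    obtain ⟨p, hp, rfl⟩ := Finset.mem_image.mp hx
    obtain ⟨q, hq, rfl⟩ := Finset.mem_image.mp hy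
    rw [Finset.mem_range] at hp hq
    exact ⟨p, q, hp, hq,
      hF2 i j p q hi hj hp hq (b' i) (d' j) (b p) (d q) (hb' i hi) (hd' j hj)
        (hb p hp) (hd q hq) hxy.symm, hxy.symm⟩
  -- Step 1: pairs match coordinatewise
  have step1 : ∀ i, i < k → (b' i = b i ∧ d' i = d i) ∨ (b' i = d i ∧ d' i = b i) := by
    intro i hi
    rcases Nat.eq_zero_or_pos i with rfl | hi1
    · left; constructor <;> omega
    have hi0 : i ≠ 0 := by omega
    have h1 : b i = b' i ∨ b i = d' i := by
      obtain ⟨p, q, hp, hq, hpair, hsum⟩ := decompose i 0 hi (by omega)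
      rcases pair_cases hi0 hpair with ⟨rfl, rfl⟩ | ⟨rfl, rfl⟩
      · left; omega
      · right; omega
    have h2 : d i = d' i ∨ d i = b' i := by
      obtain ⟨p, q, hp, hq, hpair, hsum⟩ := decompose 0 i (by omega) hi
      rcases pair_cases (Ne.symm hi0) hpair with ⟨rfl, rfl⟩ | ⟨rfl, rfl⟩
      · left; omega
      · right; omega
    have h3 : b' i = b i ∨ b' i = d i := by
      obtain ⟨p, q, hp, hq, hpair, hsum⟩ := decompose' i 0 hi (by omega)
      rcases pair_cases hi0 hpair with ⟨rfl, rfl⟩ | ⟨rfl, rfl⟩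
      · left; omega
      · right; omega
    have h4 : d' i = d i ∨ d' i = b i := by
      obtain ⟨p, q, hp, hq, hpair, hsum⟩ := decompose' 0 i (by omega) hi
      rcases pair_cases (Ne.symm hi0) hpair with ⟨rfl, rfl⟩ | ⟨rfl, rfl⟩
      · left; omega
      · right; omega
    omega
  by_cases hcase : ∀ i, i < k → b' i = b i
  · have hdd : ∀ i, i < k → d' i = d i := by
      intro i hi
      have := step1 i hi
      have := hcase i hi
      omega
    have hUU : U' = U := by
      rw [hUb, hU'b]
      exact Finset.image_congr fun x hx => hcase x (Finset.mem_range.mp (by simpa using hx))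
    have hVV : V' = V := by
      rw [hVd, hV'd]
      exact Finset.image_congr fun x hx => hdd x (Finset.mem_range.mp (by simpa using hx))
    rw [hUU, hVV]
  · push_neg at hcase
    obtain ⟨i0, hi0k, hi0⟩ := hcase
    have hswap0 : b' i0 = d i0 ∧ d' i0 = b i0 ∧ b i0 ≠ d i0 := by
      have := step1 i0 hi0k
      omega
    have hswap : ∀ j, j < k → b' j = d j ∧ d' j = b j := by
      intro j hj
      rcases step1 j hj with ⟨h1, h2⟩ | h
      · -- unswapped branch; show b j = d j, else contradiction via pair sums
        by_cases hbd : b j = d j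
        · omega
        · exfalso
          have hij : i0 ≠ j := by
            intro hh; subst hh; omega
          obtain ⟨p, q, hp, hq, hpair, hsum⟩ := decompose i0 j hi0k hj
          rcases pair_cases hij hpair with ⟨rfl, rfl⟩ | ⟨rfl, rfl⟩
          · omega
          · omega
      · exact h
    have hUV : U' = V := by
      rw [hVd, hU'b]
      exact Finset.image_congr fun x hx =>
        (hswap x (Finset.mem_range.mp (by simpa using hx))).1
    have hVU : V' = U := by
      rw [hUb, hV'd]
      exact Finset.image_congr fun x hx =>
        (hswap x (Finset.mem_range.mp (by simpa using hx))).2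
    rw [hUV, hVU, Finset.pair_comm]
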